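/- Let A be a finite-dimensional real alternative algebra with unity, M ⊆ A a real subspace with basis v₀ = 1, v₁, …, v_m, and let x₁, …, x_n ∈ M. Then for any element a ∈ A and any multiset of indices drawn from {1,…,m}, the sum over all distinguishable permutations (i₁,…,i_k) of that multiset of the products (x_{i₁} x_{i₂} ⋯ x_{i_k} a), computed with a fixed parenthesization, is independent of the chosen parenthesization. In particular the left-to-right bracketed sum equals the right-to-left bracketed sum: ∑_σ ((⋯((x_{i₁} x_{i₂}) x_{i₃}) ⋯) x_{i_k}) a = ∑_σ x_{i₁}( x_{i₂}( ⋯ (x_{i_k} a)⋯)). -/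

import Mathlib

set_option linter.unusedSectionVars false

/-- A full binary tree with `n` leaves, encoding a parenthesization (associative order)
of a product of `n` factors. -/
inductive BracketTree : ℕ → Type
  | leaf : BracketTree 1
  | node {p q : ℕ} : BracketTree p → BracketTree q → BracketTree (p + q)

/-- Evaluate a parenthesization tree on (the first `n` entries of) a list,
using `d` as a default value. -/
def BracketTree.evalList {A : Type*} [Mul A] (d : A) :
    ∀ {n : ℕ}, BracketTree n → List A → A
  | _, .leaf, l => l.headD d
  | _, .node (p := p) t₁ t₂, l => t₁.evalList d (l.take p) * t₂.evalList d (l.drop p)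

namespace BracketProof

variable {A : Type*} [NonAssocRing A] [Module ℝ A] [SMulCommClass ℝ A A] [IsScalarTower ℝ A A]

/-- associator -/
def asc (a b c : A) : A := a * b * c - a * (b * c)

lemma half (x : A) (h : x + x = 0) : x = 0 := by
  have h2 : (2:ℝ) • x = 0 := by rw [two_smul]; exact h
  calc x = ((2:ℝ)⁻¹ * 2) • x := by norm_num
  _ = (2:ℝ)⁻¹ • ((2:ℝ) • x) := by rw [mul_smul]
  _ = 0 := by rw [h2, smul_zero]

lemma asc_add₁ (a a' b c : A) : asc (a + a') b c = asc a b c + asc a' b c := by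
  simp only [asc, add_mul]; abel

lemma asc_add₂ (a b b' c : A) : asc a (b + b') c = asc a b c + asc a b' c := by
  simp only [asc, add_mul, mul_add]; abel

lemma asc_add₃ (a b c c' : A) : asc a b (c + c') = asc a b c + asc a b c' := by
  simp only [asc, mul_add]; abel

variable (hLA : ∀ a b : A, (a * a) * b = a * (a * b))
variable (hRA : ∀ a b : A, (a * b) * b = a * (b * b))

include hLA in
lemma asc_aab (a b : A) : asc a a b = 0 := sub_eq_zero.mpr (hLA a b)

include hRA in
lemma asc_abb (a b : A) : asc a b b = 0 := sub_eq_zero.mpr (hRA a b)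

include hLA in
lemma asc_swap12 (a b c : A) : asc a b c = - asc b a c := by
  have h : asc (a + b) (a + b) c = 0 := asc_aab hLA _ _
  rw [asc_add₁, asc_add₂, asc_add₂, asc_aab hLA, asc_aab hLA] at h
  rw [eq_neg_iff_add_eq_zero]
  calc asc a b c + asc b a c = 0 + asc a b c + (asc b a c + 0) := by abel
  _ = 0 := h

include hRA in
lemma asc_swap23 (a b c : A) : asc a b c = - asc a c b := by
  have h : asc a (b + c) (b + c) = 0 := asc_abb hRA _ _
  rw [asc_add₂, asc_add₃, asc_add₃, asc_abb hRA, asc_abb hRA] at h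
  rw [eq_neg_iff_add_eq_zero]
  calc asc a b c + asc a c b = 0 + asc a b c + (asc a c b + 0) := by abel
  _ = 0 := h

include hLA hRA in
lemma asc_flex (a b : A) : asc a b a = 0 := by
  rw [asc_swap12 hLA, asc_abb hRA, neg_zero]

lemma teich (a b c d : A) :
    asc (a*b) c d - asc a (b*c) d + asc a b (c*d) = a * asc b c d + asc a b c * d := by
  simp only [asc, mul_sub, sub_mul]; abel

/-- powers, right-nested -/
def pw (y : A) : ℕ → A
  | 0 => 1
  | n+1 => y * pw y n

include hLA hRA in
lemma pwKC (y : A) : ∀ m, (∀ d : A, asc y (pw y m) d = 0) ∧ (y * pw y m = pw y m * y)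
  | 0 => by
    constructor
    · intro d; simp [pw, asc]
    · simp [pw]
  | m+1 => by
    obtain ⟨hK, hC⟩ := pwKC y m
    have hflex : asc y (pw y m) y = 0 := by
      rw [asc_swap23 hRA, asc_swap12 hLA, asc_aab hLA, neg_neg]
    constructor
    · intro d
      have ht := teich y (pw y m) y d
      have h1 : asc (pw y m) y d = 0 := by
        rw [asc_swap12 hLA, hK d, neg_zero]
      have h2 : asc y (pw y m * y) d = - asc (y * pw y m) y d := by
        rw [← hC, asc_swap12 hLA]
      rw [h1, hflex, hK (y * d), mul_zero, zero_mul, add_zero, h2] at ht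
      have h3 : asc (y * pw y m) y d = 0 := by
        apply half
        have := ht
        -- ht : asc (y * pw y m) y d - - asc (y * pw y m) y d + 0 = 0
        rw [sub_neg_eq_add, add_zero] at this
        exact this
      show asc y (y * pw y m) d = 0
      rw [asc_swap12 hLA, h3, neg_zero]
    · show y * (y * pw y m) = (y * pw y m) * y
      have : asc y (pw y m) y = 0 := hflex
      rw [asc] at this
      have h4 : (y * pw y m) * y = y * (pw y m * y) := sub_eq_zero.mp this
      rw [h4, ← hC]

include hLA hRA in
lemma pw_step (y : A) (m : ℕ) (d : A) : pw y (m+1) * d = y * (pw y m * d) := by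
  have h := (pwKC hLA hRA y m).1 d
  rw [asc] at h
  exact sub_eq_zero.mp h

include hLA hRA in
lemma pw_mul_assoc (y : A) : ∀ (m : ℕ) (n : ℕ) (c : A),
    pw y m * (pw y n * c) = pw y (m+n) * c
  | 0 => by intro n c; simp [pw, one_mul]
  | m+1 => by
    intro n c
    rw [pw_step hLA hRA, pw_mul_assoc y m n c, ← pw_step hLA hRA,
      show m + 1 + n = m + n + 1 from by omega]


/-- functional evaluation -/
def evalF : ∀ {n : ℕ}, BracketTree n → (ℕ → A) → A
  | _, .leaf, g => g 0
  | _, .node (p := p) t₁ t₂, g => evalF t₁ g * evalF t₂ (fun i => g (p + i))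

lemma tree_one_le : ∀ {n : ℕ}, BracketTree n → 1 ≤ n := by
  intro n t
  induction t with
  | leaf => exact le_refl 1
  | node t₁ t₂ ih₁ ih₂ => omega

lemma evalF_congr : ∀ {n : ℕ} (t : BracketTree n) {g g' : ℕ → A},
    (∀ i < n, g i = g' i) → evalF t g = evalF t g' := by
  intro n t
  induction t with
  | leaf => intro g g' h; exact h 0 (by norm_num)
  | node t₁ t₂ ih₁ ih₂ =>
    intro g g' h
    rename_i p q
    show evalF t₁ g * _ = evalF t₁ g' * _
    rw [ih₁ (fun i hi => h i (by omega)), ih₂ (fun i hi => h (p+i) (by omega))]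

lemma evalList_eq_evalF : ∀ {n : ℕ} (t : BracketTree n) (w : List A),
    t.evalList 0 w = evalF t (fun i => w.getD i 0) := by
  intro n t
  induction t with
  | leaf =>
    intro w
    show w.headD 0 = w.getD 0 0
    cases w <;> rfl
  | node t₁ t₂ ih₁ ih₂ =>
    intro w
    rename_i p q
    show (t₁.evalList 0 (w.take p)) * (t₂.evalList 0 (w.drop p)) = evalF t₁ _ * evalF t₂ _
    rw [ih₁, ih₂]
    congr 1
    · apply evalF_congr
      intro i hi
      simp only [List.getD_eq_getElem?_getD, List.getElem?_take_of_lt hi]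
    · apply evalF_congr
      intro i hi
      simp only [List.getD_eq_getElem?_getD, List.getElem?_drop]

lemma evalF_add : ∀ {n : ℕ} (t : BracketTree n) (g : ℕ → A) (j : ℕ), j < n → ∀ (b c : A),
    evalF t (Function.update g j (b+c))
      = evalF t (Function.update g j b) + evalF t (Function.update g j c) := by
  intro n t
  induction t with
  | leaf =>
    intro g j hj b c
    interval_cases j
    show Function.update g 0 (b+c) 0
      = Function.update g 0 b 0 + Function.update g 0 c 0
    simp
  | node t₁ t₂ ih₁ ih₂ =>
    intro g j hj b c
    rename_i p q
    show evalF t₁ _ * evalF t₂ _ = evalF t₁ _ * evalF t₂ _ + evalF t₁ _ * evalF t₂ _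
    by_cases hjp : j < p
    · have hr : ∀ z : A, (fun i => Function.update g j z (p + i)) = fun i => g (p + i) := by
        intro z; funext i; exact Function.update_of_ne (by omega) _ _
      rw [hr, hr, hr, ih₁ g j hjp b c, add_mul]
    · have hr : ∀ z : A, (fun i => Function.update g j z (p + i))
          = Function.update (fun i => g (p + i)) (j - p) z := by
        intro z; funext i
        by_cases hij : p + i = j
        · rw [hij, Function.update_self, show j - p = i from by omega, Function.update_self]
        · rw [Function.update_of_ne hij, Function.update_of_ne (show i ≠ j - p from by omega)]
      have hl : ∀ z : A, evalF t₁ (Function.update g j z) = evalF t₁ g := by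
        intro z; apply evalF_congr; intro i hi
        exact Function.update_of_ne (by omega) _ _
      rw [hr, hr, hr, hl, hl, hl, ih₂ _ (j - p) (by omega) b c, mul_add]

lemma evalF_smul : ∀ {n : ℕ} (t : BracketTree n) (g : ℕ → A) (j : ℕ), j < n → ∀ (c : ℝ) (b : A),
    evalF t (Function.update g j (c • b)) = c • evalF t (Function.update g j b) := by
  intro n t
  induction t with
  | leaf =>
    intro g j hj c b
    interval_cases j
    show Function.update g 0 (c • b) 0 = c • Function.update g 0 b 0
    simp
  | node t₁ t₂ ih₁ ih₂ =>
    intro g j hj c b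
    rename_i p q
    show evalF t₁ _ * evalF t₂ _ = _ • (evalF t₁ _ * evalF t₂ _)
    by_cases hjp : j < p
    · have hr : ∀ z : A, (fun i => Function.update g j z (p + i)) = fun i => g (p + i) := by
        intro z; funext i; exact Function.update_of_ne (by omega) _ _
      rw [hr, hr, ih₁ g j hjp c b, smul_mul_assoc]
    · have hr : ∀ z : A, (fun i => Function.update g j z (p + i))
          = Function.update (fun i => g (p + i)) (j - p) z := by
        intro z; funext i
        by_cases hij : p + i = j
        · rw [hij, Function.update_self, show j - p = i from by omega, Function.update_self]
        · rw [Function.update_of_ne hij, Function.update_of_ne (show i ≠ j - p from by omega)]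
      have hl : ∀ z : A, evalF t₁ (Function.update g j z) = evalF t₁ g := by
        intro z; apply evalF_congr; intro i hi
        exact Function.update_of_ne (by omega) _ _
      rw [hr, hr, hl, hl, ih₂ _ (j - p) (by omega) c b, mul_smul_comm]

include hLA hRA in
lemma evalF_const (z : A) : ∀ {n : ℕ} (t : BracketTree n), evalF t (fun _ => z) = pw z n := by
  intro n t
  induction t with
  | leaf => show z = pw z 1; simp [pw]
  | node t₁ t₂ ih₁ ih₂ =>
    rename_i p q
    show evalF t₁ (fun _ => z) * evalF t₂ (fun _ => z) = pw z (p + q)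
    rw [ih₁, ih₂]
    have := pw_mul_assoc hLA hRA z p q 1
    rw [mul_one, mul_one] at this
    exact this

include hLA hRA in
lemma evalF_mixed (z a : A) : ∀ {n : ℕ} (t : BracketTree n),
    evalF t (fun i => if i < n - 1 then z else a) = pw z (n-1) * a := by
  intro n t
  induction t with
  | leaf =>
    show a = pw z 0 * a
    simp [pw]
  | node t₁ t₂ ih₁ ih₂ =>
    rename_i p q
    have hq : 1 ≤ q := tree_one_le t₂
    have hp : 1 ≤ p := tree_one_le t₁
    show evalF t₁ _ * evalF t₂ _ = pw z (p + q - 1) * a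
    have h1 : evalF t₁ (fun i => if i < p + q - 1 then z else a) = pw z p := by
      rw [evalF_congr t₁ (g' := fun _ => z) (fun i hi => if_pos (by omega)),
        evalF_const hLA hRA]
    have h2 : (fun i => if p + i < p + q - 1 then z else a)
        = fun i => if i < q - 1 then z else a := by
      funext i
      by_cases h : i < q - 1
      · rw [if_pos (by omega), if_pos h]
      · rw [if_neg (by omega), if_neg h]
    rw [h1, h2, ih₂, pw_mul_assoc hLA hRA, show p + (q-1) = p + q - 1 from by omega]


/-- extend a tuple by `a` beyond position `n` -/
def extF {n : ℕ} (a : A) (w : Fin n → A) : ℕ → A :=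
  fun i => if h : i < n then w ⟨i, h⟩ else a

lemma extF_update {n : ℕ} [DecidableEq (Fin n)] (a : A) (w : Fin n → A) (i : Fin n) (z : A) :
    extF a (Function.update w i z) = Function.update (extF a w) i.1 z := by
  funext j
  rw [Function.update_apply]
  by_cases hj : j < n
  · simp only [extF, dif_pos hj, Function.update_apply]
    by_cases hij : j = i.1
    · rw [if_pos hij, if_pos (Fin.ext hij)]
    · rw [if_neg hij, if_neg (fun h => hij (congrArg Fin.val h))]
  · simp only [extF, dif_neg hj]
    rw [if_neg (show j ≠ i.1 from fun h => hj (h ▸ i.2))]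

/-- the evaluation as a multilinear map -/
def evalML {n : ℕ} (t : BracketTree (n+1)) (a : A) :
    MultilinearMap ℝ (fun _ : Fin n => A) A where
  toFun w := evalF t (extF a w)
  map_update_add' := by
    intro dec w i b c
    rw [extF_update, extF_update, extF_update]
    exact evalF_add t _ i.1 (by omega) b c
  map_update_smul' := by
    intro dec w i c b
    rw [extF_update, extF_update]
    exact evalF_smul t _ i.1 (by omega) c b

lemma evalML_apply {n : ℕ} (t : BracketTree (n+1)) (a : A) (w : Fin n → A) :
    evalML t a w = evalF t (extF a w) := rfl

include hLA hRA in
lemma expand {n : ℕ} {ι : Type*} [Fintype ι] [DecidableEq ι]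
    (t : BracketTree (n+1)) (a : A) (x : ι → A) (S : Finset ι) :
    ∑ f ∈ Fintype.piFinset (fun _ : Fin n => S), evalF t (extF a (x ∘ f))
      = pw (∑ i ∈ S, x i) n * a := by
  have h := (evalML t a).map_sum_finset (fun (_ : Fin n) (j : ι) => x j) (fun _ => S)
  have hL : evalML t a (fun _ => ∑ j ∈ S, x j) = pw (∑ i ∈ S, x i) n * a := by
    rw [evalML_apply]
    have he : extF a (fun _ : Fin n => ∑ j ∈ S, x j)
        = fun i => if i < (n+1) - 1 then (∑ j ∈ S, x j) else a := by
      funext i; simp [extF]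
    rw [he, evalF_mixed hLA hRA]
    simp
  rw [hL] at h
  rw [h]
  exact Finset.sum_congr rfl (fun f _ => by rw [evalML_apply]; rfl)

lemma signsum {n : ℕ} (f : Fin n → Fin n) :
    (∑ S ∈ (Finset.univ : Finset (Fin n)).powerset,
        if ∀ i, f i ∈ S then ((-1:ℤ)^(n - S.card)) else 0)
      = if Function.Surjective f then 1 else 0 := by
  classical
  set R : Finset (Fin n) := Finset.image f Finset.univ with hR
  have hcond : ∀ S : Finset (Fin n), (∀ i, f i ∈ S) ↔ R ⊆ S := by
    intro S
    constructor
    · intro h j hj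
      obtain ⟨i, _, rfl⟩ := Finset.mem_image.mp hj
      exact h i
    · intro h i
      exact h (Finset.mem_image_of_mem f (Finset.mem_univ i))
  have h1 : (∑ S ∈ (Finset.univ : Finset (Fin n)).powerset,
        if ∀ i, f i ∈ S then ((-1:ℤ)^(n - S.card)) else 0)
      = ∑ S ∈ (Finset.univ : Finset (Fin n)).powerset.filter (fun S => R ⊆ S),
          ((-1:ℤ)^(n - S.card)) := by
    rw [Finset.sum_filter]
    exact Finset.sum_congr rfl (fun S _ => if_congr (hcond S) rfl rfl)
  rw [h1]
  have h2 : ∑ S ∈ (Finset.univ : Finset (Fin n)).powerset.filter (fun S => R ⊆ S),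
        ((-1:ℤ)^(n - S.card))
      = ∑ T ∈ Rᶜ.powerset, ((-1:ℤ)^(n - (R ∪ T).card)) := by
    apply Finset.sum_nbij' (i := fun S => S \ R) (j := fun T => R ∪ T)
    · intro S hS
      simp only [Finset.mem_powerset]
      rw [Finset.mem_filter] at hS
      intro x hx
      rw [Finset.mem_sdiff] at hx
      simpa using hx.2
    · intro T hT
      simp only [Finset.mem_filter, Finset.mem_powerset]
      exact ⟨Finset.subset_univ _, Finset.subset_union_left⟩
    · intro S hS
      rw [Finset.mem_filter] at hS
      exact Finset.union_sdiff_of_subset hS.2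
    · intro T hT
      rw [Finset.mem_powerset] at hT
      exact Finset.union_sdiff_cancel_left (disjoint_compl_right.mono_right hT)
    · intro S hS
      rw [Finset.mem_filter] at hS
      rw [Finset.union_sdiff_of_subset hS.2]
  rw [h2]
  have hcompl : Rᶜ.card = n - R.card := by
    rw [Finset.card_compl, Fintype.card_fin]
  have hRle : R.card ≤ n := by
    have := Finset.card_le_univ R; simpa using this
  have h3 : ∑ T ∈ Rᶜ.powerset, ((-1:ℤ)^(n - (R ∪ T).card))
      = (-1:ℤ)^(Rᶜ.card) * ∑ T ∈ Rᶜ.powerset, ((-1:ℤ)^T.card) := by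
    rw [Finset.mul_sum]
    apply Finset.sum_congr rfl
    intro T hT
    have hTsub := Finset.mem_powerset.mp hT
    have hTle : T.card ≤ Rᶜ.card := Finset.card_le_card hTsub
    rw [Finset.card_union_of_disjoint (disjoint_compl_right.mono_right hTsub), hcompl]
    have hsq : (-1:ℤ)^T.card * (-1:ℤ)^T.card = 1 := by
      rw [← pow_add]
      exact Even.neg_one_pow ⟨T.card, rfl⟩
    have hsplit : n - R.card = (n - (R.card + T.card)) + T.card := by omega
    rw [hsplit, pow_add, mul_assoc, hsq, mul_one]
  rw [h3, Finset.sum_powerset_neg_one_pow_card]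
  by_cases hs : Function.Surjective f
  · have hRuniv : R = Finset.univ := by
      rw [hR]; exact Finset.image_univ_of_surjective hs
    rw [if_pos hs, hRuniv, Finset.compl_univ, if_pos rfl]
    simp
  · have hne : Rᶜ ≠ ∅ := by
      intro hc
      apply hs
      intro j
      have : R = Finset.univ := by
        rwa [← Finset.compl_eq_empty_iff]
      have hj : j ∈ R := this ▸ Finset.mem_univ j
      obtain ⟨i, _, hi⟩ := Finset.mem_image.mp hj
      exact ⟨i, hi⟩
    rw [if_neg hs, if_neg hne, mul_zero]

lemma sum_perm {n : ℕ} (H : (Fin n → Fin n) → A) :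
    ∑ f ∈ Finset.univ.filter (fun f : Fin n → Fin n => Function.Surjective f), H f
      = ∑ σ : Equiv.Perm (Fin n), H (⇑σ) := by
  symm
  apply Finset.sum_bij (i := fun (σ : Equiv.Perm (Fin n)) _ => ⇑σ)
  · intro σ _
    rw [Finset.mem_filter]
    exact ⟨Finset.mem_univ _, σ.surjective⟩
  · intro σ₁ _ σ₂ _ h
    exact Equiv.coe_inj.mp h
  · intro f hf
    rw [Finset.mem_filter] at hf
    have hb : Function.Bijective f := Finite.surjective_iff_bijective.mp hf.2
    exact ⟨Equiv.ofBijective f hb, Finset.mem_univ _, rfl⟩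
  · intro σ _
    rfl

include hLA hRA in
lemma key {n : ℕ} (t : BracketTree (n+1)) (a : A) (x : Fin n → A) :
    ∑ σ : Equiv.Perm (Fin n), evalF t (extF a (x ∘ ⇑σ))
      = ∑ S ∈ (Finset.univ : Finset (Fin n)).powerset,
          (-1:ℤ)^(n - S.card) • (pw (∑ i ∈ S, x i) n * a) := by
  classical
  have hstep1 : ∀ S : Finset (Fin n),
      (-1:ℤ)^(n - S.card) • (pw (∑ i ∈ S, x i) n * a)
        = ∑ f : Fin n → Fin n,
            (if ∀ i, f i ∈ S then ((-1:ℤ)^(n - S.card)) else 0) • evalF t (extF a (x ∘ f)) := by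
    intro S
    rw [← expand hLA hRA t a x S, Finset.smul_sum]
    have hpi : Fintype.piFinset (fun _ : Fin n => S)
        = Finset.univ.filter (fun f : Fin n → Fin n => ∀ i, f i ∈ S) := by
      ext f; simp [Fintype.mem_piFinset]
    rw [hpi, Finset.sum_filter]
    apply Finset.sum_congr rfl
    intro f _
    split_ifs with h
    · rfl
    · rw [zero_smul]
  rw [Finset.sum_congr rfl (fun S _ => hstep1 S), Finset.sum_comm]
  have hstep2 : ∀ f : Fin n → Fin n,
      (∑ S ∈ (Finset.univ : Finset (Fin n)).powerset,
          (if ∀ i, f i ∈ S then ((-1:ℤ)^(n - S.card)) else 0) • evalF t (extF a (x ∘ f)))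
        = (if Function.Surjective f then (1:ℤ) else 0) • evalF t (extF a (x ∘ f)) := by
    intro f
    rw [← Finset.sum_smul, signsum]
  rw [Finset.sum_congr rfl (fun f _ => hstep2 f)]
  have hstep3 : (∑ f : Fin n → Fin n,
      (if Function.Surjective f then (1:ℤ) else 0) • evalF t (extF a (x ∘ f)))
      = ∑ f ∈ Finset.univ.filter (fun f : Fin n → Fin n => Function.Surjective f),
          evalF t (extF a (x ∘ f)) := by
    rw [Finset.sum_filter]
    apply Finset.sum_congr rfl
    intro f _
    split_ifs with h
    · rw [one_smul]
    · rw [zero_smul]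
  rw [hstep3, sum_perm]

lemma evalList_ofFn_append {n : ℕ} (t : BracketTree (n+1)) (w : Fin n → A) (a : A) :
    t.evalList 0 (List.ofFn w ++ [a]) = evalF t (extF a w) := by
  rw [evalList_eq_evalF]
  apply evalF_congr
  intro i hi
  simp only [List.getD_eq_getElem?_getD, extF]
  by_cases h : i < n
  · rw [List.getElem?_append_left (by simp [h]), dif_pos h]
    simp [List.getElem?_ofFn, h]
  · have hi' : i = n := by omega
    subst hi'
    rw [List.getElem?_append_right (by simp), dif_neg h]
    simp

lemma exists_perm_ofFn {l₁ l₂ : List A} (h : l₁.Perm l₂) :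
    ∃ σ : Equiv.Perm (Fin l₂.length), l₁ = List.ofFn (l₂.get ∘ ⇑σ) := by
  induction h with
  | nil => exact ⟨1, by simp⟩
  | @cons x t₁ t₂ h ih =>
    obtain ⟨σ', hσ'⟩ := ih
    refine ⟨Equiv.Perm.decomposeFin.symm (0, σ'), ?_⟩
    symm
    apply List.ext_get (by simp [hσ'])
    intro i h1 h2
    rw [List.get_ofFn]
    match i with
    | 0 =>
      show (x :: t₂).get (Equiv.Perm.decomposeFin.symm (0, σ') 0) = x
      rw [Equiv.Perm.decomposeFin_symm_apply_zero]
      simp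
    | Nat.succ i =>
      have hi : i < t₂.length := by
        have h3 := h.length_eq
        simp at h2
        omega
      show (x :: t₂).get (Equiv.Perm.decomposeFin.symm (0, σ') (Fin.succ ⟨i, hi⟩)) = _
      rw [Equiv.Perm.decomposeFin_symm_apply_succ, Equiv.swap_self]
      show t₂.get (σ' ⟨i, hi⟩) = (x :: t₁).get ⟨i + 1, h2⟩
      have : (x :: t₁).get ⟨i + 1, h2⟩ = t₁.get ⟨i, by have h4 := h2; simp at h4; omega⟩ := rfl
      rw [this, List.get_of_eq hσ' ⟨i, _⟩, List.get_ofFn]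
      rfl
  | swap x y l' =>
    refine ⟨Equiv.swap ⟨0, by simp⟩ ⟨1, by simp⟩, ?_⟩
    symm
    apply List.ext_get (by simp)
    intro i h1 h2
    rw [List.get_ofFn]
    match i with
    | 0 =>
      show (x :: y :: l').get (Equiv.swap ⟨0, _⟩ ⟨1, _⟩ ⟨0, _⟩) = y
      rw [Equiv.swap_apply_left]
      rfl
    | 1 =>
      show (x :: y :: l').get (Equiv.swap ⟨0, _⟩ ⟨1, _⟩ ⟨1, _⟩) = x
      rw [Equiv.swap_apply_right]
      rfl
    | Nat.succ (Nat.succ i) =>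
      show (x :: y :: l').get (Equiv.swap ⟨0, _⟩ ⟨1, _⟩ ⟨i + 2, _⟩) = _
      rw [Equiv.swap_apply_of_ne_of_ne (by simp [Fin.ext_iff]) (by simp [Fin.ext_iff])]
      rfl
  | @trans la lb lc h₁ h₂ ih₁ ih₂ =>
    obtain ⟨σ₁, hσ₁⟩ := ih₁
    obtain ⟨σ₂, hσ₂⟩ := ih₂
    have hlen : lb.length = lc.length := h₂.length_eq
    refine ⟨((finCongr hlen).symm.trans (σ₁.trans (finCongr hlen))).trans σ₂, ?_⟩
    have hget : ∀ j : Fin lb.length, lb.get j = lc.get (σ₂ (finCongr hlen j)) := by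
      intro j
      rw [List.get_of_eq hσ₂ j, List.get_ofFn]
      rfl
    rw [hσ₁, List.ofFn_congr hlen (lb.get ∘ ⇑σ₁)]
    apply congrArg
    funext i
    simp only [Function.comp_apply, Equiv.trans_apply]
    rw [hget]
    rfl

section Lists
variable [DecidableEq A]

lemma img_perms (l : List A) :
    Finset.image (fun σ : Equiv.Perm (Fin l.length) => List.ofFn (l.get ∘ ⇑σ)) Finset.univ
      = l.permutations.toFinset := by
  ext l'
  simp only [Finset.mem_image, List.mem_toFinset, List.mem_permutations]
  constructor
  · rintro ⟨σ, -, rfl⟩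
    have := Equiv.Perm.ofFn_comp_perm σ l.get
    rwa [List.ofFn_get] at this
  · intro h
    obtain ⟨σ, hσ⟩ := exists_perm_ofFn h
    exact ⟨σ, Finset.mem_univ _, hσ.symm⟩

lemma fiber_card (l : List A) (τ : Equiv.Perm (Fin l.length)) :
    (Finset.univ.filter fun σ : Equiv.Perm (Fin l.length) =>
        List.ofFn (l.get ∘ ⇑σ) = List.ofFn (l.get ∘ ⇑τ)).card
      = (Finset.univ.filter fun σ : Equiv.Perm (Fin l.length) =>
          List.ofFn (l.get ∘ ⇑σ) = l).card := by
  apply Finset.card_bij' (i := fun σ _ => σ * τ⁻¹) (j := fun σ _ => σ * τ)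
  · intro σ hσ
    rw [Finset.mem_filter] at hσ ⊢
    refine ⟨Finset.mem_univ _, ?_⟩
    have hfun : l.get ∘ ⇑σ = l.get ∘ ⇑τ := List.ofFn_injective hσ.2
    have : l.get ∘ ⇑(σ * τ⁻¹) = l.get := by
      funext i
      have := congrFun hfun (τ⁻¹ i)
      simpa using this
    rw [this, List.ofFn_get]
  · intro σ hσ
    rw [Finset.mem_filter] at hσ ⊢
    refine ⟨Finset.mem_univ _, ?_⟩
    have hfun : l.get ∘ ⇑σ = l.get :=
      List.ofFn_injective (hσ.2.trans (List.ofFn_get l).symm)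
    apply congrArg
    funext i
    have := congrFun hfun (τ i)
    simpa using this
  · intro σ _
    simp [mul_assoc]
  · intro σ _
    simp [mul_assoc]

lemma sum_fiber (l : List A) (F : List A → A) :
    ∑ σ : Equiv.Perm (Fin l.length), F (List.ofFn (l.get ∘ ⇑σ))
      = (Finset.univ.filter fun σ : Equiv.Perm (Fin l.length) =>
          List.ofFn (l.get ∘ ⇑σ) = l).card •
          ∑ l' ∈ l.permutations.toFinset, F l' := by
  classical
  rw [← img_perms]
  rw [← Finset.sum_fiberwise_of_maps_to
    (g := fun σ : Equiv.Perm (Fin l.length) => List.ofFn (l.get ∘ ⇑σ))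
    (fun σ _ => Finset.mem_image_of_mem (fun σ : Equiv.Perm (Fin l.length) => List.ofFn (l.get ∘ ⇑σ)) (Finset.mem_univ σ))
    (fun σ => F (List.ofFn (l.get ∘ ⇑σ)))]
  rw [Finset.smul_sum]
  apply Finset.sum_congr rfl
  intro l' hl'
  obtain ⟨τ, -, rfl⟩ := Finset.mem_image.mp hl'
  have hcongr : ∀ σ ∈ Finset.univ.filter (fun σ : Equiv.Perm (Fin l.length) =>
      List.ofFn (l.get ∘ ⇑σ) = List.ofFn (l.get ∘ ⇑τ)),
      F (List.ofFn (l.get ∘ ⇑σ)) = F (List.ofFn (l.get ∘ ⇑τ)) := by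
    intro σ hσ
    rw [Finset.mem_filter] at hσ
    rw [hσ.2]
  rw [Finset.sum_congr rfl hcongr, Finset.sum_const, fiber_card]

end Lists

/-- trees realizing foldl / foldr -/
def copyT {m m' : ℕ} (t : BracketTree m) (h : m = m') : BracketTree m' := h ▸ t

lemma evalList_copyT {m m' : ℕ} (t : BracketTree m) (h : m = m') (d : A) (w : List A) :
    (copyT t h).evalList d w = t.evalList d w := by subst h; rfl

def leftT : (n : ℕ) → BracketTree (n+1)
  | 0 => .leaf
  | n+1 => .node (leftT n) .leaf

def rightT : (n : ℕ) → BracketTree (n+1)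
  | 0 => .leaf
  | n+1 => copyT (BracketTree.node .leaf (rightT n)) (by omega)

lemma leftT_eval : ∀ (n : ℕ) (w : List A) (b : A), w.length = n →
    (leftT n).evalList 0 (w ++ [b]) = (w.foldl (· * ·) 1) * b
  | 0, w, b, h => by
    rw [List.eq_nil_of_length_eq_zero h]
    show ([b] : List A).headD 0 = _
    simp
  | n+1, w, b, h => by
    obtain (rfl | ⟨w', c, rfl⟩) := w.eq_nil_or_concat'
    · simp at h
    · have hw' : w'.length = n := by simpa using h
      show (BracketTree.node (leftT n) BracketTree.leaf).evalList 0 ((w' ++ [c]) ++ [b]) = _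
      rw [BracketTree.evalList]
      rw [List.take_left' (by simp [hw']), List.drop_left' (by simp [hw'])]
      rw [leftT_eval n w' c hw']
      show (w'.foldl (· * ·) 1 * c) * ([b] : List A).headD 0 = _
      simp
  termination_by n => n

lemma rightT_eval : ∀ (n : ℕ) (w : List A) (b : A), w.length = n →
    (rightT n).evalList 0 (w ++ [b]) = w.foldr (· * ·) b
  | 0, w, b, h => by
    rw [List.eq_nil_of_length_eq_zero h]
    show ([b] : List A).headD 0 = _
    simp
  | n+1, w, b, h => by
    cases w with
    | nil => simp at h
    | cons c w' =>
      have hw' : w'.length = n := by simpa using h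
      show (copyT (BracketTree.node BracketTree.leaf (rightT n)) _).evalList 0 _ = _
      rw [evalList_copyT, BracketTree.evalList]
      show ((c :: w' ++ [b]).take 1).headD 0 * _ = _
      rw [show (c :: w' ++ [b]).take 1 = [c] from rfl,
        show (c :: w' ++ [b]).drop 1 = w' ++ [b] from rfl]
      rw [rightT_eval n w' b hw']
      rfl
  termination_by n => n

end BracketProof
/-- Let `A` be a finite-dimensional real alternative algebra with unity and `M ⊆ A` a real
subspace with basis `v 0 = 1, v 1, …, v m`.  Given elements of `M` (listed, with repetitions
allowed, in a list `l`) and `a ∈ A`, the sum over all distinguishable permutations `l'` of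
`l` of the products `x_{i₁} ⋯ x_{i_k} a`, computed in a fixed parenthesization, does not
depend on the chosen parenthesization; in particular the left-to-right bracketed sum equals
the right-to-left bracketed sum. -/
theorem symmetrized_product_bracketing_independent {A : Type*} [NonAssocRing A] [DecidableEq A]
    [Module ℝ A] [SMulCommClass ℝ A A] [IsScalarTower ℝ A A] [FiniteDimensional ℝ A]
    (hLA : ∀ a b : A, (a * a) * b = a * (a * b))
    (hRA : ∀ a b : A, (a * b) * b = a * (b * b))
    (m : ℕ) (M : Submodule ℝ A) (v : Fin (m + 1) → A) (hv : v 0 = 1)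
    (hbasis : ∃ b : Module.Basis (Fin (m + 1)) ℝ M, ∀ s, (b s : A) = v s)
    (k : ℕ) (l : List A) (hlen : l.length = k) (hlM : ∀ x ∈ l, x ∈ M) (a : A) :
    (∀ t₁ t₂ : BracketTree (k + 1),
      ∑ l' ∈ l.permutations.toFinset, t₁.evalList 0 (l' ++ [a]) =
      ∑ l' ∈ l.permutations.toFinset, t₂.evalList 0 (l' ++ [a])) ∧
    ∑ l' ∈ l.permutations.toFinset, (l'.foldl (· * ·) 1) * a =
      ∑ l' ∈ l.permutations.toFinset, l'.foldr (· * ·) a := by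
  subst hlen
  have part1 : ∀ t₁ t₂ : BracketTree (l.length + 1),
      (∑ l' ∈ l.permutations.toFinset, t₁.evalList 0 (l' ++ [a])) =
      ∑ l' ∈ l.permutations.toFinset, t₂.evalList 0 (l' ++ [a]) := by
    intro t₁ t₂
    classical
    have keyL : ∀ t : BracketTree (l.length+1),
        (∑ σ : Equiv.Perm (Fin l.length), t.evalList 0 (List.ofFn (l.get ∘ ⇑σ) ++ [a]))
          = ∑ S ∈ (Finset.univ : Finset (Fin l.length)).powerset,
              (-1:ℤ)^(l.length - S.card) •
                (BracketProof.pw (∑ i ∈ S, l.get i) l.length * a) := by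
      intro t
      rw [← BracketProof.key hLA hRA t a l.get]
      exact Finset.sum_congr rfl fun σ _ => BracketProof.evalList_ofFn_append t _ a
    have hsum : ∀ t : BracketTree (l.length+1),
        (∑ σ : Equiv.Perm (Fin l.length), t.evalList 0 (List.ofFn (l.get ∘ ⇑σ) ++ [a]))
          = (Finset.univ.filter fun σ : Equiv.Perm (Fin l.length) =>
              List.ofFn (l.get ∘ ⇑σ) = l).card •
            ∑ l' ∈ l.permutations.toFinset, t.evalList 0 (l' ++ [a]) :=
      fun t => BracketProof.sum_fiber l (fun l' => t.evalList 0 (l' ++ [a]))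
    set C := (Finset.univ.filter fun σ : Equiv.Perm (Fin l.length) =>
        List.ofFn (l.get ∘ ⇑σ) = l).card with hCdef
    have hC : C ≠ 0 := by
      apply Finset.card_ne_zero_of_mem (a := (1 : Equiv.Perm (Fin l.length)))
      rw [Finset.mem_filter]
      refine ⟨Finset.mem_univ _, ?_⟩
      have : l.get ∘ ⇑(1 : Equiv.Perm (Fin l.length)) = l.get := rfl
      rw [this, List.ofFn_get]
    have heq : C • (∑ l' ∈ l.permutations.toFinset, t₁.evalList 0 (l' ++ [a]))
        = C • (∑ l' ∈ l.permutations.toFinset, t₂.evalList 0 (l' ++ [a])) := by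
      rw [← hsum t₁, ← hsum t₂, keyL t₁, keyL t₂]
    have heq' : ((C:ℝ)) • (∑ l' ∈ l.permutations.toFinset, t₁.evalList 0 (l' ++ [a]))
        = (C:ℝ) • (∑ l' ∈ l.permutations.toFinset, t₂.evalList 0 (l' ++ [a])) := by
      rw [Nat.cast_smul_eq_nsmul, Nat.cast_smul_eq_nsmul]
      exact heq
    have hfin := congrArg (fun z => (C:ℝ)⁻¹ • z) heq'
    simpa [smul_smul,
      inv_mul_cancel₀ (show (C:ℝ) ≠ 0 from Nat.cast_ne_zero.mpr hC)] using hfin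
  refine ⟨part1, ?_⟩
  have h := part1 (BracketProof.leftT l.length) (BracketProof.rightT l.length)
  rw [Finset.sum_congr rfl (fun l' hl' => BracketProof.leftT_eval l.length l' a
      (List.Perm.length_eq (List.mem_permutations.mp (List.mem_toFinset.mp hl')))),
    Finset.sum_congr rfl (fun l' hl' => BracketProof.rightT_eval l.length l' a
      (List.Perm.length_eq (List.mem_permutations.mp (List.mem_toFinset.mp hl'))))] at h
  exact h
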